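/- Let A be a finite alphabet. The monoid M = {L ⊆ A* : ε ∈ L} of languages over A containing the empty word, equipped with language concatenation as product and {ε} as neutral element, is pre-rational. -/

import Mathlib

/-! Auxiliary lemmas -/

set_option linter.unusedSectionVars false

section Aux

variable {B : Type} [Fintype B]

open List

/-- Complement of a regular language is regular. -/
lemma isRegular_compl {L : Language B} (h : L.IsRegular) :
    Language.IsRegular (Lᶜ : Set (List B)) := by
  obtain ⟨σ, fσ, M, hM⟩ := h
  exact ⟨σ, fσ, ⟨M.step, M.start, M.acceptᶜ⟩, by
    ext w
    have : w ∈ M.accepts ↔ w ∈ L := by rw [hM]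
    simp only [DFA.mem_accepts] at this ⊢
    simp [DFA.eval, DFA.evalFrom] at this ⊢
    tauto⟩

lemma prod_evalFrom {σ₁ σ₂ : Type} (M₁ : DFA B σ₁) (M₂ : DFA B σ₂)
    (s₁ : σ₁) (s₂ : σ₂) (w : List B) :
    (DFA.mk (fun p a => (M₁.step p.1 a, M₂.step p.2 a)) (M₁.start, M₂.start)
      ∅ : DFA B (σ₁ × σ₂)).evalFrom (s₁, s₂) w = (M₁.evalFrom s₁ w, M₂.evalFrom s₂ w) := by
  induction w generalizing s₁ s₂ with
  | nil => rfl
  | cons a w ih => simpa [DFA.evalFrom] using ih (M₁.step s₁ a) (M₂.step s₂ a)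

/-- Union of two regular languages is regular. -/
lemma isRegular_union {L₁ L₂ : Language B} (h₁ : L₁.IsRegular) (h₂ : L₂.IsRegular) :
    Language.IsRegular (L₁ ⊔ L₂) := by
  obtain ⟨σ₁, f₁, M₁, hM₁⟩ := h₁
  obtain ⟨σ₂, f₂, M₂, hM₂⟩ := h₂
  refine ⟨σ₁ × σ₂, by infer_instance,
    ⟨fun p a => (M₁.step p.1 a, M₂.step p.2 a), (M₁.start, M₂.start),
      {p | p.1 ∈ M₁.accept ∨ p.2 ∈ M₂.accept}⟩, ?_⟩
  ext w
  rw [show (w ∈ L₁ ⊔ L₂) ↔ (w ∈ L₁ ∨ w ∈ L₂) from Iff.rfl]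
  have h1 : w ∈ M₁.accepts ↔ w ∈ L₁ := by rw [hM₁]
  have h2 : w ∈ M₂.accepts ↔ w ∈ L₂ := by rw [hM₂]
  simp only [DFA.mem_accepts] at h1 h2 ⊢
  have hp := prod_evalFrom M₁ M₂ M₁.start M₂.start w
  simp only [DFA.eval] at h1 h2 ⊢
  constructor
  · intro h
    have h' : M₁.evalFrom M₁.start w ∈ M₁.accept ∨ M₂.evalFrom M₂.start w ∈ M₂.accept := by
      have := h
      rw [show (DFA.mk (fun p a => (M₁.step p.1 a, M₂.step p.2 a)) (M₁.start, M₂.start)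
          {p | p.1 ∈ M₁.accept ∨ p.2 ∈ M₂.accept} : DFA B (σ₁ × σ₂)).evalFrom
          (M₁.start, M₂.start) w
          = (M₁.evalFrom M₁.start w, M₂.evalFrom M₂.start w) from hp] at this
      exact this
    rcases h' with h' | h'
    · exact Or.inl (h1.mp h')
    · exact Or.inr (h2.mp h')
  · intro h
    show _ ∈ {p : σ₁ × σ₂ | p.1 ∈ M₁.accept ∨ p.2 ∈ M₂.accept}
    rw [show (DFA.mk (fun p a => (M₁.step p.1 a, M₂.step p.2 a)) (M₁.start, M₂.start)
        {p | p.1 ∈ M₁.accept ∨ p.2 ∈ M₂.accept} : DFA B (σ₁ × σ₂)).evalFrom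
        (M₁.start, M₂.start) w
        = (M₁.evalFrom M₁.start w, M₂.evalFrom M₂.start w) from hp]
    rcases h with h | h
    · exact Or.inl (h1.mpr h)
    · exact Or.inr (h2.mpr h)

lemma isRegular_empty : Language.IsRegular (⊥ : Language B) :=
  ⟨Unit, by infer_instance, ⟨fun _ _ => (), (), ∅⟩, by
    ext w
    exact iff_of_false (by simp [DFA.mem_accepts]) (fun h => h)⟩

/-- The language of superwords (wrt `List.Sublist`) of a fixed word is regular. -/
lemma isRegular_superwords (u : List B) [DecidableEq B] :
    Language.IsRegular {v : List B | u <+ v} := by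
  classical
  -- DFA with states `Fin (u.length + 1)`: state `i` means the first `i` letters matched.
  let step : Fin (u.length + 1) → B → Fin (u.length + 1) := fun i a =>
    if h : (i : ℕ) < u.length then
      (if u[(i : ℕ)] = a then ⟨(i : ℕ) + 1, Nat.succ_lt_succ h⟩ else i)
    else i
  let M : DFA B (Fin (u.length + 1)) :=
    ⟨step, ⟨0, Nat.succ_pos _⟩, {⟨u.length, Nat.lt_succ_self _⟩}⟩
  have key : ∀ (v : List B) (i : Fin (u.length + 1)),
      M.evalFrom i v = ⟨u.length, Nat.lt_succ_self _⟩ ↔ u.drop i <+ v := by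
    intro v
    induction v with
    | nil =>
      intro i
      simp only [DFA.evalFrom_nil]
      constructor
      · rintro rfl; simp
      · intro h
        have h0 : u.drop i = [] := List.sublist_nil.mp h
        have h1 : u.length - (i : ℕ) = 0 := by
          have := congrArg List.length h0; simpa using this
        have hi : (i : ℕ) = u.length := by
          have := i.isLt; omega
        exact Fin.ext hi
    | cons a v ih =>
      intro i
      have hev : M.evalFrom i (a :: v) = M.evalFrom (step i a) v := rfl
      rw [hev, ih]
      by_cases hlt : (i : ℕ) < u.length
      · have hdrop : u.drop i = u[(i : ℕ)] :: u.drop ((i : ℕ) + 1) :=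
          List.drop_eq_getElem_cons hlt
        by_cases heq : u[(i : ℕ)] = a
        · have hstep : step i a = ⟨(i : ℕ) + 1, Nat.succ_lt_succ hlt⟩ := by
            simp only [step]
            rw [dif_pos hlt, if_pos heq]
          rw [hstep, hdrop, heq]
          simp only [Fin.val_mk]
          exact (List.cons_sublist_cons).symm
        · have hstep : step i a = i := by
            simp only [step]
            rw [dif_pos hlt, if_neg heq]
          rw [hstep, hdrop]
          constructor
          · intro h; exact h.cons a
          · intro h
            rcases List.cons_sublist_cons'.mp h with h' | ⟨heq', -⟩
            · exact h'
            · exact absurd heq' heq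
      · have hi : (i : ℕ) = u.length := by
          have := i.isLt; omega
        have hstep : step i a = i := by
          simp only [step]
          rw [dif_neg hlt]
        rw [hstep]
        have hdrop : u.drop i = [] := by
          rw [hi]; simp
        rw [hdrop]
        simp
  refine ⟨Fin (u.length + 1), by infer_instance, M, ?_⟩
  ext v
  simp only [DFA.mem_accepts, DFA.eval]
  have hkey := key v ⟨0, Nat.succ_pos _⟩
  simp only [Fin.val_mk, List.drop_zero] at hkey
  constructor
  · intro h; exact hkey.mp (by simpa [M] using h)
  · intro h; simpa [M] using hkey.mpr h

/-- A finite union of regular languages is regular. -/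
lemma isRegular_biUnion {T : Set (List B)} (hT : T.Finite) {f : List B → Set (List B)}
    (hf : ∀ u ∈ T, Language.IsRegular (f u)) :
    Language.IsRegular (⋃ u ∈ T, f u : Set (List B)) := by
  refine Set.Finite.induction_on
    (motive := fun T _ => (∀ u ∈ T, Language.IsRegular (f u)) →
      Language.IsRegular (⋃ u ∈ T, f u : Set (List B)))
    T hT (fun _ => by simpa using (show Language.IsRegular (∅ : Set (List B)) from isRegular_empty (B := B))) ?_ hf
  intro a s has hsfin ih hf
  rw [show (⋃ u ∈ insert a s, f u) = f a ∪ ⋃ u ∈ s, f u from by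
      simp [Set.biUnion_insert]]
  exact isRegular_union (hf a (Set.mem_insert _ _))
    (ih fun u hu => hf u (Set.mem_insert_of_mem _ hu))

/-- Every set of words upward closed under the sublist (scattered subword) order is regular. -/
lemma isRegular_of_upward_closed (S : Set (List B))
    (hS : ∀ u v : List B, u <+ v → u ∈ S → v ∈ S) :
    Language.IsRegular (S : Set (List B)) := by
  classical
  -- Higman's lemma: the sublist order is a pwo on lists over a finite alphabet.
  have hpwo : (Set.univ : Set B).PartiallyWellOrderedOn (· = ·) :=
    Set.Finite.partiallyWellOrderedOn (Set.finite_univ)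
  have higman := hpwo.partiallyWellOrderedOn_sublistForall₂ (r := (· = ·))
  have hsub : ∀ l₁ l₂ : List B, List.SublistForall₂ (· = ·) l₁ l₂ ↔ l₁ <+ l₂ := by
    intro l₁ l₂
    rw [List.sublistForall₂_iff]
    constructor
    · rintro ⟨l, hl, hsl⟩
      rwa [show l₁ = l from by rwa [← List.forall₂_eq_eq_eq]]
    · intro h; exact ⟨l₁, by rw [List.forall₂_eq_eq_eq], h⟩
  -- the set of minimal elements of `S`
  have hmin : ∀ n (v : List B), v.length ≤ n → v ∈ S →
      ∃ u, (u ∈ S ∧ ∀ w ∈ S, w <+ u → w = u) ∧ u <+ v := by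
    intro n
    induction n with
    | zero =>
      intro v hv hvS
      have hnil : v = [] := List.eq_nil_of_length_eq_zero (Nat.le_zero.mp hv)
      subst hnil
      exact ⟨[], ⟨hvS, fun w hw hsl => List.sublist_nil.mp hsl⟩, List.Sublist.refl _⟩
    | succ n ih =>
      intro v hv hvS
      by_cases hm : ∀ w ∈ S, w <+ v → w = v
      · exact ⟨v, ⟨hvS, hm⟩, List.Sublist.refl _⟩
      · push_neg at hm
        obtain ⟨w, hwS, hwsl, hwne⟩ := hm
        have hlen : w.length < v.length := by
          rcases lt_or_eq_of_le hwsl.length_le with h | h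
          · exact h
          · exact absurd (hwsl.eq_of_length h) hwne
        obtain ⟨u, huT, husl⟩ := ih w (by omega) hwS
        exact ⟨u, huT, husl.trans hwsl⟩
  set T : Set (List B) := {u ∈ S | ∀ w ∈ S, w <+ u → w = u} with hT
  -- `T` is a finite antichain
  have hTanti : IsAntichain (· <+ ·) T := by
    intro a ha b hb hne hsl
    exact hne (hb.2 a ha.1 hsl)
  have hTpwo : T.PartiallyWellOrderedOn (· <+ ·) := by
    intro g
    obtain ⟨m, k, hmk, hr⟩ := higman (fun n => ⟨(g n).1, by simp⟩)
    exact ⟨m, k, hmk, (hsub (g m).1 (g k).1).mp hr⟩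
  have hTfin : T.Finite := hTanti.finite_of_partiallyWellOrderedOn hTpwo
  -- `S` is the union of the superword languages of elements of `T`
  have hSeq : S = ⋃ u ∈ T, {v : List B | u <+ v} := by
    ext v
    simp only [Set.mem_iUnion, Set.mem_setOf_eq]
    constructor
    · intro hv
      obtain ⟨u, huT, husl⟩ := hmin v.length v le_rfl hv
      exact ⟨u, huT, husl⟩
    · rintro ⟨u, huT, husl⟩
      exact hS u v husl huT.1
  rw [show (S : Set (List B)) = ⋃ u ∈ T, {v : List B | u <+ v} from hSeq]
  exact isRegular_biUnion hTfin fun u _ => isRegular_superwords u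

end Aux

/-- A monoid `M` is *pre-rational* if for every finite alphabet `A`, every monoid
homomorphism `μ` from the free monoid `A*` to `M`, and every `m ∈ M`, the language
`μ⁻¹(m) ⊆ A*` is regular. -/
def IsPreRational (M : Type*) [Monoid M] : Prop :=
  ∀ (A : Type) (_ : Fintype A) (μ : FreeMonoid A →* M) (m : M),
    Language.IsRegular {w : List A | μ (FreeMonoid.ofList w) = m}

/-- The monoid of languages over `A` containing the empty word, as a submonoid of the
monoid of languages over `A` under concatenation (with neutral element `{ε}`). -/
def epsLang (A : Type) : Submonoid (Language A) where
  carrier := {L : Language A | [] ∈ L}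
  one_mem' := Language.nil_mem_one
  mul_mem' := fun h₁ h₂ => Language.mem_mul.mpr ⟨[], h₁, [], h₂, rfl⟩

/-- For a finite alphabet `A`, the monoid of languages over `A` containing the empty word,
under concatenation, is pre-rational. -/
theorem epsLang_isPreRational (A : Type) [Fintype A] :
    IsPreRational (epsLang A) := by
  intro B _ μ m
  classical
  -- every value of `μ` contains the empty word, hence `1 ≤ μ x` as languages
  have hone : ∀ x : FreeMonoid B, (1 : Language A) ≤ (μ x : Language A) := by
    intro x l hl
    change l ∈ (1 : Language A) at hl
    rw [Language.mem_one] at hl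
    subst hl
    exact (μ x).2
  -- monotonicity of `μ` with respect to the sublist order
  have mono : ∀ u v : List B, List.Sublist u v →
      ((μ (FreeMonoid.ofList u) : Language A) ≤ (μ (FreeMonoid.ofList v) : Language A)) := by
    intro u v h
    induction h with
    | slnil => exact le_rfl
    | @cons l₁ l₂ a h ih =>
      refine ih.trans ?_
      have : FreeMonoid.ofList (a :: l₂) = FreeMonoid.of a * FreeMonoid.ofList l₂ := rfl
      rw [this, map_mul]
      intro x hx
      exact Language.mem_mul.mpr ⟨[], hone (FreeMonoid.of a) (Language.nil_mem_one), x, hx,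
        by simp⟩
    | @cons_cons l₁ l₂ a h ih =>
      have h1 : FreeMonoid.ofList (a :: l₁) = FreeMonoid.of a * FreeMonoid.ofList l₁ := rfl
      have h2 : FreeMonoid.ofList (a :: l₂) = FreeMonoid.of a * FreeMonoid.ofList l₂ := rfl
      rw [h1, h2, map_mul, map_mul]
      intro x hx
      obtain ⟨y, hy, z, hz, rfl⟩ := Language.mem_mul.mp hx
      exact Language.mem_mul.mpr ⟨y, hy, z, ih hz, rfl⟩
  -- the two upward-closed sets
  set U : Set (List B) := {w | (m : Language A) ≤ (μ (FreeMonoid.ofList w) : Language A)}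
    with hU
  set V : Set (List B) := {w | ¬ ((μ (FreeMonoid.ofList w) : Language A) ≤ (m : Language A))}
    with hV
  have hUup : ∀ u v : List B, List.Sublist u v → u ∈ U → v ∈ U := fun u v h hu =>
    le_trans hu (mono u v h)
  have hVup : ∀ u v : List B, List.Sublist u v → u ∈ V → v ∈ V := fun u v h hu hc =>
    hu (le_trans (mono u v h) hc)
  have hregU : Language.IsRegular (U : Language B) := isRegular_of_upward_closed U hUup
  have hregV : Language.IsRegular (V : Language B) := isRegular_of_upward_closed V hVup
  have key : {w : List B | μ (FreeMonoid.ofList w) = m} = ((Uᶜ ∪ V)ᶜ : Set (List B)) := by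
    ext w
    simp only [Set.mem_setOf_eq, Set.mem_compl_iff, Set.mem_union, hU, hV, not_or, not_not]
    constructor
    · intro h
      rw [h]
      exact ⟨le_rfl, le_rfl⟩
    · rintro ⟨h1, h2⟩
      exact Subtype.ext (le_antisymm h2 h1)
  rw [key]
  exact isRegular_compl (isRegular_union (isRegular_compl hregU) hregV)
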